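/- For any locally finite Borel measure μ on the real line and any α ∈ (0,1), the sharp Tauberian constant of the uncentered Hardy–Littlewood maximal operator with respect to μ satisfies C_μ(α) ≤ (2−α)/α; equivalently, for every measurable set E with 0 < μ(E) < ∞, μ({x ∈ ℝ : M_μ χ_E(x) > α}) ≤ ((2−α)/α) μ(E). -/

import Mathlib

open MeasureTheory Set
open scoped ENNReal Classical

/-- Helper: if `[a,b]` has left endpoint to the right of `a'`, right endpoint to the
left of `b''`, and `x ≤ b'`, `a'' ≤ x`, then `[a,b] ⊆ [a',b'] ∪ [a'',b'']`. -/
lemma solyanik_tri_subset {a a' a'' b b' b'' x : ℝ}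
    (ha : a' ≤ a) (hb : b ≤ b'') (hx1 : x ≤ b') (hx2 : a'' ≤ x) :
    Icc a b ⊆ Icc a' b' ∪ Icc a'' b'' := by
  intro y hy
  rcases le_total y x with h | h
  · exact Or.inl ⟨ha.trans hy.1, h.trans hx1⟩
  · exact Or.inr ⟨hx2.trans h, hy.2.trans hb⟩

/-- Among three intervals with a common point, one is contained in the union of
the other two. -/
lemma solyanik_tri {a₁ b₁ a₂ b₂ a₃ b₃ x : ℝ}
    (h1 : x ∈ Icc a₁ b₁) (h2 : x ∈ Icc a₂ b₂) (h3 : x ∈ Icc a₃ b₃) :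
    Icc a₁ b₁ ⊆ Icc a₂ b₂ ∪ Icc a₃ b₃ ∨ Icc a₂ b₂ ⊆ Icc a₁ b₁ ∪ Icc a₃ b₃ ∨
      Icc a₃ b₃ ⊆ Icc a₁ b₁ ∪ Icc a₂ b₂ := by
  have hmin : (a₁ ≤ a₂ ∧ a₁ ≤ a₃) ∨ (a₂ ≤ a₁ ∧ a₂ ≤ a₃) ∨ (a₃ ≤ a₁ ∧ a₃ ≤ a₂) := by
    rcases le_total a₁ a₂ with h | h
    · rcases le_total a₁ a₃ with h' | h'
      · exact Or.inl ⟨h, h'⟩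
      · exact Or.inr (Or.inr ⟨h', h'.trans h⟩)
    · rcases le_total a₂ a₃ with h' | h'
      · exact Or.inr (Or.inl ⟨h, h'⟩)
      · exact Or.inr (Or.inr ⟨h'.trans h, h'⟩)
  have hmax : (b₂ ≤ b₁ ∧ b₃ ≤ b₁) ∨ (b₁ ≤ b₂ ∧ b₃ ≤ b₂) ∨ (b₁ ≤ b₃ ∧ b₂ ≤ b₃) := by
    rcases le_total b₁ b₂ with h | h
    · rcases le_total b₂ b₃ with h' | h'
      · exact Or.inr (Or.inr ⟨h.trans h', h'⟩)
      · exact Or.inr (Or.inl ⟨h, h'⟩)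
    · rcases le_total b₁ b₃ with h' | h'
      · exact Or.inr (Or.inr ⟨h', h.trans h'⟩)
      · exact Or.inl ⟨h, h'⟩
  rcases hmin with h | h | h <;> rcases hmax with g | g | g
  · exact Or.inr (Or.inl ((Icc_subset_Icc h.1 g.1).trans subset_union_left))
  · exact Or.inr (Or.inr (solyanik_tri_subset h.2 g.2 h1.2 h2.1))
  · exact Or.inr (Or.inl (solyanik_tri_subset h.1 g.2 h1.2 h3.1))
  · exact Or.inr (Or.inr ((solyanik_tri_subset h.2 g.2 h2.2 h1.1).trans
      (Set.union_comm _ _).le))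
  · exact Or.inl ((Icc_subset_Icc h.1 g.1).trans subset_union_left)
  · exact Or.inl (solyanik_tri_subset h.1 g.1 h2.2 h3.1)
  · exact Or.inr (Or.inl ((solyanik_tri_subset h.2 g.1 h3.2 h1.1).trans
      (Set.union_comm _ _).le))
  · exact Or.inl ((solyanik_tri_subset h.1 g.1 h3.2 h2.1).trans (Set.union_comm _ _).le)
  · exact Or.inl ((Icc_subset_Icc h.1 g.1).trans subset_union_right)

/-- One-dimensional Besicovitch selection: from a finite family of closed intervals
one can select a subfamily with the same union in which every point lies in at most
two intervals. -/
lemma solyanik_selection {ι : Type*} [DecidableEq ι] (a b : ι → ℝ) (s : Finset ι) :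
    ∃ t ⊆ s, (⋃ i ∈ t, Icc (a i) (b i)) = (⋃ i ∈ s, Icc (a i) (b i)) ∧
      ∀ x : ℝ, (t.filter fun i => x ∈ Icc (a i) (b i)).card ≤ 2 := by
  classical
  set c := s.powerset.filter
    (fun t => (⋃ i ∈ t, Icc (a i) (b i)) = (⋃ i ∈ s, Icc (a i) (b i))) with hc
  have hsc : s ∈ c := by
    simp [hc, Finset.mem_filter, Finset.mem_powerset]
  obtain ⟨t, htc, hmin⟩ := Finset.exists_min_image c Finset.card ⟨s, hsc⟩
  have hts : t ⊆ s := Finset.mem_powerset.mp (Finset.mem_filter.mp htc).1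
  have htu : (⋃ i ∈ t, Icc (a i) (b i)) = (⋃ i ∈ s, Icc (a i) (b i)) :=
    (Finset.mem_filter.mp htc).2
  refine ⟨t, hts, htu, ?_⟩
  intro x
  by_contra hx
  have hx3 : 2 < (t.filter fun i => x ∈ Icc (a i) (b i)).card := lt_of_not_ge hx
  obtain ⟨i₁, hi₁, i₂, hi₂, i₃, hi₃, h12, h13, h23⟩ := Finset.two_lt_card.mp hx3
  rw [Finset.mem_filter] at hi₁ hi₂ hi₃
  have key : ∀ j ∈ t, ∀ u ∈ t, ∀ v ∈ t, u ≠ j → v ≠ j →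
      Icc (a j) (b j) ⊆ Icc (a u) (b u) ∪ Icc (a v) (b v) → False := by
    intro j hj u hu v hv hju hjv hsub
    have herase : (⋃ i ∈ t.erase j, Icc (a i) (b i)) = ⋃ i ∈ t, Icc (a i) (b i) := by
      apply subset_antisymm
      · intro y hy
        simp only [Set.mem_iUnion, exists_prop] at hy ⊢
        obtain ⟨i, hi, hyi⟩ := hy
        exact ⟨i, Finset.mem_of_mem_erase hi, hyi⟩
      · intro y hy
        simp only [Set.mem_iUnion, exists_prop] at hy ⊢
        obtain ⟨i, hi, hyi⟩ := hy
        by_cases hij : i = j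
        · subst hij
          rcases hsub hyi with h | h
          · exact ⟨u, Finset.mem_erase.mpr ⟨hju, hu⟩, h⟩
          · exact ⟨v, Finset.mem_erase.mpr ⟨hjv, hv⟩, h⟩
        · exact ⟨i, Finset.mem_erase.mpr ⟨hij, hi⟩, hyi⟩
    have hmem : t.erase j ∈ c := by
      rw [hc, Finset.mem_filter, Finset.mem_powerset]
      exact ⟨(Finset.erase_subset _ _).trans hts, herase.trans htu⟩
    have := hmin _ hmem
    exact absurd (Finset.card_erase_lt_of_mem hj) (not_lt.mpr this)
  rcases solyanik_tri hi₁.2 hi₂.2 hi₃.2 with H | H | H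
  · exact key i₁ hi₁.1 i₂ hi₂.1 i₃ hi₃.1 h12.symm h13.symm H
  · exact key i₂ hi₂.1 i₁ hi₁.1 i₃ hi₃.1 h12 h23.symm H
  · exact key i₃ hi₃.1 i₁ hi₁.1 i₂ hi₂.1 h13 h23 H

/-- If subsets of `E` have overlap at most `2`, the sum of their measures is at
most `2 μ E`. -/
lemma solyanik_sum_le {ι : Type*} [DecidableEq ι] (μ : Measure ℝ) {E : Set ℝ}
    (hE : MeasurableSet E) (t : Finset ι) (A : ι → Set ℝ)
    [∀ x : ℝ, DecidablePred fun i : ι => x ∈ A i]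
    (hA : ∀ i, MeasurableSet (A i)) (hAE : ∀ i, A i ⊆ E)
    (hover : ∀ x : ℝ, (t.filter fun i => x ∈ A i).card ≤ 2) :
    ∑ i ∈ t, μ (A i) ≤ 2 * μ E := by
  classical
  calc ∑ i ∈ t, μ (A i)
      = ∫⁻ x, ∑ i ∈ t, (A i).indicator (1 : ℝ → ℝ≥0∞) x ∂μ := by
        rw [lintegral_finset_sum t (fun i _ => measurable_one.indicator (hA i))]
        refine Finset.sum_congr rfl fun i _ => ?_
        rw [lintegral_indicator (hA i)]
        simp
    _ ≤ ∫⁻ x, E.indicator (fun _ => (2 : ℝ≥0∞)) x ∂μ := by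
        apply lintegral_mono
        intro x
        dsimp only
        by_cases hx : x ∈ E
        · rw [Set.indicator_of_mem hx]
          have heq : ∑ i ∈ t, (A i).indicator (1 : ℝ → ℝ≥0∞) x
              = ((t.filter fun i => x ∈ A i).card : ℝ≥0∞) := by
            rw [Finset.card_filter]
            push_cast
            refine Finset.sum_congr rfl fun i _ => ?_
            by_cases h : x ∈ A i <;> simp [Set.indicator, h]
          rw [heq]
          exact_mod_cast hover x
        · rw [Set.indicator_of_notMem hx]
          have hz : ∀ i ∈ t, (A i).indicator (1 : ℝ → ℝ≥0∞) x = 0 := fun i _ =>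
            Set.indicator_of_notMem (fun h => hx (hAE i h)) _
          rw [Finset.sum_congr rfl hz]
          simp
    _ = 2 * μ E := lintegral_indicator_const hE 2

/-- The Tauberian bound for finite families of good intervals. -/
lemma solyanik_finite_bound (μ : Measure ℝ) [IsLocallyFiniteMeasure μ]
    (α : ℝ) (hα0 : 0 < α) (hα1 : α < 1) (E : Set ℝ) (hE : MeasurableSet E)
    (s : Finset (ℚ × ℚ))
    (hs : ∀ i ∈ s, ENNReal.ofReal α * μ (Icc (i.1 : ℝ) (i.2 : ℝ))
      < μ (Icc (i.1 : ℝ) (i.2 : ℝ) ∩ E)) :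
    μ (⋃ i ∈ s, Icc (i.1 : ℝ) (i.2 : ℝ)) ≤ ENNReal.ofReal ((2 - α) / α) * μ E := by
  classical
  obtain ⟨t, hts, hunion, hover⟩ :=
    solyanik_selection (fun i : ℚ × ℚ => ((i.1 : ℝ))) (fun i => ((i.2 : ℝ))) s
  rw [← hunion]
  set U := ⋃ i ∈ t, Icc ((i.1 : ℚ) : ℝ) ((i.2 : ℚ) : ℝ) with hU
  have hc_nonneg : (0 : ℝ) ≤ (1 - α) / α := div_nonneg (by linarith) hα0.le
  -- each good interval: μ(I \ E) ≤ ((1-α)/α) μ(I ∩ E)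
  have h3 : ∀ i ∈ t, μ (Icc ((i.1 : ℚ) : ℝ) ((i.2 : ℚ) : ℝ) \ E)
      ≤ ENNReal.ofReal ((1 - α) / α) * μ (Icc ((i.1 : ℚ) : ℝ) ((i.2 : ℚ) : ℝ) ∩ E) := by
    intro i hi
    set I := Icc ((i.1 : ℚ) : ℝ) ((i.2 : ℚ) : ℝ) with hI
    have hfin : μ I ≠ ⊤ := (isCompact_Icc.measure_lt_top).ne
    have hfin1 : μ (I ∩ E) ≠ ⊤ := ((measure_mono inter_subset_left).trans_lt
      (lt_top_iff_ne_top.mpr hfin)).ne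
    have hfin2 : μ (I \ E) ≠ ⊤ := ((measure_mono diff_subset).trans_lt
      (lt_top_iff_ne_top.mpr hfin)).ne
    have good := hs i (hts hi)
    have hsplit : μ (I ∩ E) + μ (I \ E) = μ I := measure_inter_add_diff I hE
    set A := (μ (I ∩ E)).toReal with hA
    set B := (μ (I \ E)).toReal with hB
    have hA0 : (0 : ℝ) ≤ A := ENNReal.toReal_nonneg
    have hB0 : (0 : ℝ) ≤ B := ENNReal.toReal_nonneg
    have hIE : μ (I ∩ E) = ENNReal.ofReal A := (ENNReal.ofReal_toReal hfin1).symm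
    have hID : μ (I \ E) = ENNReal.ofReal B := (ENNReal.ofReal_toReal hfin2).symm
    have hImeas : μ I = ENNReal.ofReal (A + B) := by
      rw [← hsplit, hIE, hID, ENNReal.ofReal_add hA0 hB0]
    have hlt : α * (A + B) < A := by
      have hgood' := good
      rw [hImeas, hIE, ← ENNReal.ofReal_mul hα0.le] at hgood'
      exact (ENNReal.ofReal_lt_ofReal_iff_of_nonneg
        (mul_nonneg hα0.le (by linarith))).mp hgood'
    have hreal : B ≤ (1 - α) / α * A := by
      rw [div_mul_eq_mul_div, le_div_iff₀ hα0]
      nlinarith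
    rw [hID, hIE, ← ENNReal.ofReal_mul hc_nonneg]
    exact ENNReal.ofReal_le_ofReal hreal
  have h2 : μ (U \ E) ≤ ∑ i ∈ t, μ (Icc ((i.1 : ℚ) : ℝ) ((i.2 : ℚ) : ℝ) \ E) := by
    refine (measure_mono ?_).trans (measure_biUnion_finset_le t _)
    intro y hy
    obtain ⟨hyU, hyE⟩ := hy
    simp only [hU, Set.mem_iUnion, exists_prop] at hyU ⊢
    obtain ⟨i, hi, hyi⟩ := hyU
    exact ⟨i, hi, hyi, hyE⟩
  have h4 : ∑ i ∈ t, μ (Icc ((i.1 : ℚ) : ℝ) ((i.2 : ℚ) : ℝ) ∩ E) ≤ 2 * μ E := by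
    refine solyanik_sum_le μ hE t _ (fun i => measurableSet_Icc.inter hE)
      (fun i => inter_subset_right) (fun x => ?_)
    refine le_trans (Finset.card_le_card ?_) (hover x)
    intro i hi
    rw [Finset.mem_filter] at hi ⊢
    exact ⟨hi.1, hi.2.1⟩
  have hstep : μ (U \ E) ≤ ENNReal.ofReal ((1 - α) / α) * (2 * μ E) := by
    calc μ (U \ E) ≤ ∑ i ∈ t, μ (Icc ((i.1 : ℚ) : ℝ) ((i.2 : ℚ) : ℝ) \ E) := h2
      _ ≤ ∑ i ∈ t, ENNReal.ofReal ((1 - α) / α) *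
            μ (Icc ((i.1 : ℚ) : ℝ) ((i.2 : ℚ) : ℝ) ∩ E) := Finset.sum_le_sum h3
      _ = ENNReal.ofReal ((1 - α) / α) *
            ∑ i ∈ t, μ (Icc ((i.1 : ℚ) : ℝ) ((i.2 : ℚ) : ℝ) ∩ E) := by
          rw [Finset.mul_sum]
      _ ≤ ENNReal.ofReal ((1 - α) / α) * (2 * μ E) := mul_le_mul_right h4 _
  have hsplitU : μ U = μ (U ∩ E) + μ (U \ E) := (measure_inter_add_diff U hE).symm
  have hkey : ENNReal.ofReal ((2 - α) / α) * μ E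
      = μ E + ENNReal.ofReal ((1 - α) / α) * (2 * μ E) := by
    have harith : (2 - α) / α = 1 + (1 - α) / α * 2 := by
      field_simp
      ring
    rw [harith, ENNReal.ofReal_add (by norm_num) (by positivity),
      ENNReal.ofReal_mul hc_nonneg]
    rw [ENNReal.ofReal_one, add_mul, one_mul, mul_assoc]
    norm_num
  rw [hkey, hsplitU]
  exact add_le_add (measure_mono inter_subset_right) hstep

theorem solyanik_one_dim_measure (μ : Measure ℝ) [IsLocallyFiniteMeasure μ]
    (α : ℝ) (hα0 : 0 < α) (hα1 : α < 1)
    (E : Set ℝ) (hE : MeasurableSet E) (hE0 : 0 < μ E) (hEfin : μ E < ⊤) :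
    μ {x : ℝ | ∃ a b : ℝ, a ≤ x ∧ x ≤ b ∧ 0 < μ (Icc a b) ∧
        ENNReal.ofReal α * μ (Icc a b) < μ (Icc a b ∩ E)} ≤
      ENNReal.ofReal ((2 - α) / α) * μ E := by
  classical
  set good : ℚ × ℚ → Prop := fun i =>
    ENNReal.ofReal α * μ (Icc (i.1 : ℝ) (i.2 : ℝ)) < μ (Icc (i.1 : ℝ) (i.2 : ℝ) ∩ E)
    with hgood_def
  set J : ℚ × ℚ → Set ℝ := fun i => if good i then Icc (i.1 : ℝ) (i.2 : ℝ) else ∅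
    with hJ_def
  -- Step 1: the sublevel set is contained in the union of good rational intervals
  have hsub : {x : ℝ | ∃ a b : ℝ, a ≤ x ∧ x ≤ b ∧ 0 < μ (Icc a b) ∧
      ENNReal.ofReal α * μ (Icc a b) < μ (Icc a b ∩ E)} ⊆ ⋃ i : ℚ × ℚ, J i := by
    rintro x ⟨a, b, hax, hxb, hpos, hlt⟩
    -- shrink: find n with good enlarged interval
    have hmono : Antitone (fun n : ℕ => Icc (a - 1 / (n + 1)) (b + 1 / (n + 1))) := by
      intro n m hnm
      apply Icc_subset_Icc
      · have : (1 : ℝ) / (m + 1) ≤ 1 / (n + 1) := by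
          apply one_div_le_one_div_of_le
          · positivity
          · exact_mod_cast Nat.succ_le_succ hnm
        linarith
      · have : (1 : ℝ) / (m + 1) ≤ 1 / (n + 1) := by
          apply one_div_le_one_div_of_le
          · positivity
          · exact_mod_cast Nat.succ_le_succ hnm
        linarith
    have hiInter : (⋂ n : ℕ, Icc (a - 1 / (n + 1)) (b + 1 / (n + 1))) = Icc a b := by
      ext y
      simp only [Set.mem_iInter, Set.mem_Icc]
      constructor
      · intro h
        constructor
        · by_contra hya
          push_neg at hya
          obtain ⟨n, hn⟩ := exists_nat_one_div_lt (sub_pos.mpr hya)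
          have := (h n).1
          push_cast at hn this
          linarith
        · by_contra hyb
          push_neg at hyb
          obtain ⟨n, hn⟩ := exists_nat_one_div_lt (sub_pos.mpr hyb)
          have := (h n).2
          push_cast at hn this
          linarith
      · intro h n
        have h1 : (0:ℝ) < 1 / ((n:ℝ) + 1) := by positivity
        constructor <;> [linarith [h.1]; linarith [h.2]]
    have hfin0 : μ (Icc (a - 1 / ((0:ℕ) + 1)) (b + 1 / ((0:ℕ) + 1))) ≠ ⊤ :=
      (isCompact_Icc.measure_lt_top).ne
    have htend : Filter.Tendsto
        (fun n : ℕ => μ (Icc (a - 1 / (n + 1)) (b + 1 / (n + 1)))) Filter.atTop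
        (nhds (μ (Icc a b))) := by
      have := tendsto_measure_iInter_atTop (μ := μ)
        (fun n : ℕ => (measurableSet_Icc).nullMeasurableSet) hmono ⟨0, hfin0⟩
      rwa [hiInter] at this
    have htend2 : Filter.Tendsto
        (fun n : ℕ => ENNReal.ofReal α * μ (Icc (a - 1 / (n + 1)) (b + 1 / (n + 1))))
        Filter.atTop (nhds (ENNReal.ofReal α * μ (Icc a b))) :=
      ENNReal.Tendsto.const_mul htend (Or.inr ENNReal.ofReal_ne_top)
    obtain ⟨n, hn⟩ := (htend2.eventually_lt_const hlt).exists
    -- pick rationals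
    have h1n : (0:ℝ) < 1 / ((n:ℝ) + 1) := by positivity
    obtain ⟨p, hp1, hp2⟩ := exists_rat_btwn (show a - 1 / ((n:ℝ) + 1) < a by linarith)
    obtain ⟨q, hq1, hq2⟩ := exists_rat_btwn (show b < b + 1 / ((n:ℝ) + 1) by linarith)
    have hIccsub : Icc (a:ℝ) b ⊆ Icc ((p:ℝ)) ((q:ℝ)) :=
      Icc_subset_Icc hp2.le hq1.le
    have hIccsub2 : Icc ((p:ℝ)) ((q:ℝ)) ⊆ Icc (a - 1 / ((n:ℝ) + 1)) (b + 1 / ((n:ℝ) + 1)) :=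
      Icc_subset_Icc hp1.le hq2.le
    have hgoodpq : good (p, q) := by
      rw [hgood_def]
      calc ENNReal.ofReal α * μ (Icc ((p:ℝ)) ((q:ℝ)))
          ≤ ENNReal.ofReal α * μ (Icc (a - 1 / ((n:ℝ) + 1)) (b + 1 / ((n:ℝ) + 1))) :=
            mul_le_mul_right (measure_mono hIccsub2) _
        _ < μ (Icc a b ∩ E) := hn
        _ ≤ μ (Icc ((p:ℝ)) ((q:ℝ)) ∩ E) :=
            measure_mono (inter_subset_inter_left E hIccsub)
    refine Set.mem_iUnion.mpr ⟨(p, q), ?_⟩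
    simp only [hJ_def, if_pos hgoodpq]
    exact ⟨hp2.le.trans hax, hxb.trans hq1.le⟩
  refine (measure_mono hsub).trans ?_
  -- Step 2: countable union, pass to finite unions
  obtain ⟨e, he⟩ : ∃ e : ℕ → ℚ × ℚ, Function.Surjective e := by
    exact ⟨fun n => (Denumerable.eqv (ℚ × ℚ)).symm n, (Denumerable.eqv (ℚ × ℚ)).symm.surjective⟩
  rw [← he.iUnion_comp J]
  have hbound : ∀ N : ℕ, μ (Set.accumulate (fun n => J (e n)) N)
      ≤ ENNReal.ofReal ((2 - α) / α) * μ E := by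
    intro N
    have hsubN : Set.accumulate (fun n => J (e n)) N ⊆
        ⋃ i ∈ ((Finset.range (N + 1)).image e).filter good, Icc ((i.1 : ℚ) : ℝ) ((i.2 : ℚ) : ℝ) := by
      intro y hy
      obtain ⟨k, hk, hyk⟩ := Set.mem_accumulate.mp hy
      simp only [hJ_def] at hyk
      by_cases hg : good (e k)
      · rw [if_pos hg] at hyk
        simp only [Set.mem_iUnion, exists_prop, Finset.mem_filter, Finset.mem_image]
        exact ⟨e k, ⟨⟨k, Finset.mem_range.mpr (Nat.lt_succ_of_le hk), rfl⟩, hg⟩, hyk⟩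
      · rw [if_neg hg] at hyk
        exact absurd hyk (Set.notMem_empty y)
    refine (measure_mono hsubN).trans ?_
    refine solyanik_finite_bound μ α hα0 hα1 E hE _ (fun i hi => ?_)
    exact (Finset.mem_filter.mp hi).2
  exact le_of_tendsto' tendsto_measure_iUnion_accumulate hbound
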